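/- arXiv:2602.16581 — 2 statements merged into one kernel-verified Lean document; each statement's English description precedes it below -/
import Mathlib

section
/- Let β : ℝ^d × ℝ^d → [s0, s1] ⊂ (0,1) be measurable, κ > 0, and define ν(x,y) = d/2 + β(x,y), P(β) = π^(−d/2) · 2^(1 − d/2 + β) / |Γ(−β)| · κ^(d/2 + β), and γ(x,y) = (1/2) P(β(x,y)) K_{ν(x,y)}(κ|x−y|) |x−y|^{ν(x,y)} / |x−y|^{d + 2β(x,y)}. Then there exist r0 > 0 and constants c1, c2 > 0 such that for all x, y with 0 < |x−y| ≤ r0, c1 |x−y|^{−(d+2β(x,y))} ≤ γ(x,y) ≤ c2 |x−y|^{−(d+2β(x,y))}. -/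
open MeasureTheory Real Set

noncomputable section

/-- Modified Bessel function of the second kind (integral representation). -/
def besselK (ν z : ℝ) : ℝ :=
  ∫ t in Set.Ioi (0 : ℝ), Real.exp (-z * Real.cosh t) * Real.cosh (ν * t)

/-- The prefactor `P(β) = π^(−d/2) · 2^(1 − d/2 + β) / |Γ(−β)| · κ^(d/2 + β)`. -/
def kernelPrefactor (d : ℕ) (κ β : ℝ) : ℝ :=
  Real.pi ^ (-(d : ℝ) / 2) * 2 ^ (1 - (d : ℝ) / 2 + β) / |Real.Gamma (-β)| *
    κ ^ ((d : ℝ) / 2 + β)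

/-- The variable-order kernel
`γ(x,y) = (1/2) P(β(x,y)) K_{ν(x,y)}(κ|x−y|) |x−y|^{ν(x,y)} / |x−y|^{d+2β(x,y)}`
with `ν(x,y) = d/2 + β(x,y)`. -/
def varKernel (d : ℕ) (κ : ℝ)
    (β : EuclideanSpace ℝ (Fin d) × EuclideanSpace ℝ (Fin d) → ℝ)
    (x y : EuclideanSpace ℝ (Fin d)) : ℝ :=
  (1 / 2) * kernelPrefactor d κ (β (x, y)) *
    besselK ((d : ℝ) / 2 + β (x, y)) (κ * ‖x - y‖) *
    ‖x - y‖ ^ ((d : ℝ) / 2 + β (x, y)) / ‖x - y‖ ^ ((d : ℝ) + 2 * β (x, y))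

lemma pow_le_factorial_mul_exp (n : ℕ) {x : ℝ} (hx : 0 ≤ x) :
    x ^ n ≤ (Nat.factorial n : ℝ) * Real.exp x := by
  have h := Real.sum_le_exp_of_nonneg hx (n + 1)
  have h2 : x ^ n / (Nat.factorial n : ℝ) ≤ Real.exp x := by
    refine le_trans ?_ h
    exact Finset.single_le_sum (f := fun i => x ^ i / (Nat.factorial i))
      (fun i _ => by positivity) (Finset.self_mem_range_succ n)
  have hn : (0 : ℝ) < (Nat.factorial n : ℝ) := by positivity
  rw [div_le_iff₀ hn] at h2
  linarith

lemma exp_neg_le_factorial_div (n : ℕ) {x : ℝ} (hx : 0 < x) :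
    Real.exp (-x) ≤ (Nat.factorial n : ℝ) / x ^ n := by
  have h := pow_le_factorial_mul_exp n hx.le
  rw [Real.exp_neg, le_div_iff₀ (by positivity)]
  rw [inv_mul_le_iff₀ (Real.exp_pos x)]
  linarith

noncomputable def bkIntegrand (ν z : ℝ) : ℝ → ℝ :=
  fun t => Real.exp (-z * Real.cosh t) * Real.cosh (ν * t)

lemma bkIntegrand_continuous (ν z : ℝ) : Continuous (bkIntegrand ν z) := by
  unfold bkIntegrand; fun_prop

lemma bkIntegrand_nonneg (ν z : ℝ) (t : ℝ) : 0 ≤ bkIntegrand ν z t := by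
  unfold bkIntegrand; positivity

lemma cosh_le_exp_self {t : ℝ} (ht : 0 ≤ t) : Real.cosh t ≤ Real.exp t := by
  rw [Real.cosh_eq]
  have : Real.exp (-t) ≤ Real.exp t := Real.exp_le_exp.mpr (by linarith)
  linarith

lemma half_exp_le_cosh (t : ℝ) : Real.exp t / 2 ≤ Real.cosh t := by
  rw [Real.cosh_eq]
  have : (0:ℝ) < Real.exp (-t) := Real.exp_pos _
  linarith

lemma exp_half_le_cosh (t : ℝ) : Real.exp t / 2 ≤ Real.cosh t := half_exp_le_cosh t

lemma bkIntegrand_integrableOn {ν z : ℝ} (hν : 0 ≤ ν) (hz : 0 < z) :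
    IntegrableOn (bkIntegrand ν z) (Ioi (0:ℝ)) := by
  set n : ℕ := ⌈ν⌉₊ + 1 with hn
  have hνn : ν + 1 ≤ (n : ℝ) := by
    have := Nat.le_ceil ν
    push_cast [hn]; linarith
  set C : ℝ := (Nat.factorial n : ℝ) * (2 / z) ^ n with hC
  have hbpos : (0:ℝ) < (n : ℝ) - ν := by linarith
  refine Integrable.mono' (((exp_neg_integrableOn_Ioi 0 hbpos).const_mul C)) 
    ((bkIntegrand_continuous ν z).aestronglyMeasurable) ?_
  filter_upwards [ae_restrict_mem measurableSet_Ioi] with t ht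
  have ht0 : (0:ℝ) < t := ht
  rw [Real.norm_eq_abs, abs_of_nonneg (bkIntegrand_nonneg ν z t)]
  unfold bkIntegrand
  have h1 : Real.exp (-z * Real.cosh t) ≤ Real.exp (-(z * Real.exp t / 2)) := by
    apply Real.exp_le_exp.mpr
    have := half_exp_le_cosh t
    nlinarith
  have h2 : Real.exp (-(z * Real.exp t / 2)) ≤
      (Nat.factorial n : ℝ) / (z * Real.exp t / 2) ^ n :=
    exp_neg_le_factorial_div n (by positivity)
  have h3 : ((Nat.factorial n : ℝ)) / (z * Real.exp t / 2) ^ n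
      = C * Real.exp (-((n:ℝ) * t)) := by
    rw [hC, Real.exp_neg, div_pow, mul_pow, ← Real.exp_nat_mul, div_pow]
    have h5 : rexp ((n:ℝ) * t) ≠ 0 := (Real.exp_pos _).ne'
    have h6 : z ≠ 0 := hz.ne'
    field_simp
  have h4 : Real.cosh (ν * t) ≤ Real.exp (ν * t) :=
    cosh_le_exp_self (by positivity)
  calc Real.exp (-z * Real.cosh t) * Real.cosh (ν * t)
      ≤ ((Nat.factorial n : ℝ) / (z * Real.exp t / 2) ^ n) * Real.exp (ν * t) := by
        apply mul_le_mul (h1.trans h2) h4 (Real.cosh_pos _).le (by positivity)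
    _ = C * Real.exp (-((n:ℝ) * t)) * Real.exp (ν * t) := by rw [h3]
    _ = C * Real.exp ((ν - (n:ℝ)) * t) := by rw [mul_assoc, ← Real.exp_add]; ring_nf
    _ ≤ C * Real.exp (-((n:ℝ) - ν) * t) := by
        apply mul_le_mul_of_nonneg_left _ (by positivity)
        apply Real.exp_le_exp.mpr
        nlinarith

noncomputable def bk (ν z : ℝ) : ℝ := ∫ t in Set.Ioi (0:ℝ), bkIntegrand ν z t

lemma bk_lower {ν z : ℝ} (hν : 0 ≤ ν) (hz : 0 < z) (hz1 : z ≤ 1) :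
    Real.exp (-Real.exp 1) / 2 * z ^ (-ν) ≤ bk ν z := by
  set L : ℝ := -Real.log z with hLdef
  have hL0 : 0 ≤ L := by
    have := Real.log_nonpos hz.le hz1
    simp [hLdef]; linarith
  have hzpow : z ^ (-ν) = Real.exp (ν * L) := by
    rw [Real.rpow_def_of_pos hz]; congr 1; rw [hLdef]; ring
  have hint : IntegrableOn (bkIntegrand ν z) (Ioi (0:ℝ)) := bkIntegrand_integrableOn hν hz
  have hsub : Ioc L (L + 1) ⊆ Ioi (0:ℝ) := fun t ht => lt_of_le_of_lt hL0 ht.1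
  have h1 : ∫ t in Ioc L (L+1), bkIntegrand ν z t ≤ bk ν z := by
    apply setIntegral_mono_set hint
    · filter_upwards with t using bkIntegrand_nonneg ν z t
    · exact HasSubset.Subset.eventuallyLE hsub
  refine le_trans ?_ h1
  have hmeas : volume (Ioc L (L+1)) = 1 := by
    rw [Real.volume_Ioc]; norm_num
  have h2 := setIntegral_ge_of_const_le (c := Real.exp (-Real.exp 1) / 2 * z ^ (-ν))
    (measurableSet_Ioc) (by rw [hmeas]; exact ENNReal.one_ne_top)
    (f := bkIntegrand ν z) ?_ (hint.mono_set hsub)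
  · calc Real.exp (-Real.exp 1) / 2 * z ^ (-ν)
        = Real.exp (-Real.exp 1) / 2 * z ^ (-ν) * (volume (Ioc L (L+1))).toReal := by
          rw [hmeas]; simp
      _ ≤ _ := by
          have h2' := h2
          simp only [smul_eq_mul, Measure.real] at h2'
          linarith [h2']
  · intro t ht
    have htL : L < t := ht.1
    have ht1 : t ≤ L + 1 := ht.2
    have ht0 : 0 ≤ t := le_trans hL0 htL.le
    unfold bkIntegrand
    have hcosh : z * Real.cosh t ≤ Real.exp 1 := by
      have hc := cosh_le_exp_self ht0
      have : z * Real.exp t ≤ Real.exp 1 := by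
        calc z * Real.exp t = Real.exp (Real.log z + t) := by
              rw [Real.exp_add, Real.exp_log hz]
          _ ≤ Real.exp 1 := by
              apply Real.exp_le_exp.mpr
              have : Real.log z = -L := by rw [hLdef]; ring
              rw [this]; linarith
      nlinarith
    have hexp : Real.exp (-Real.exp 1) ≤ Real.exp (-z * Real.cosh t) := by
      apply Real.exp_le_exp.mpr; linarith
    have hch : z ^ (-ν) / 2 ≤ Real.cosh (ν * t) := by
      have h5 : Real.exp (ν * L) ≤ Real.exp (ν * t) :=
        Real.exp_le_exp.mpr (mul_le_mul_of_nonneg_left htL.le hν)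
      have h6 := half_exp_le_cosh (ν * t)
      rw [hzpow]; linarith
    calc Real.exp (-Real.exp 1) / 2 * z ^ (-ν)
        = Real.exp (-Real.exp 1) * (z ^ (-ν) / 2) := by ring
      _ ≤ Real.exp (-z * Real.cosh t) * Real.cosh (ν * t) := by
          apply mul_le_mul hexp hch (by positivity) (Real.exp_pos _).le

lemma integrableOn_exp_mul_Iic' {c : ℝ} (hc : 0 < c) :
    IntegrableOn (fun s : ℝ => Real.exp (c * s)) (Iic (0:ℝ)) := by
  have h1 : Integrable ((Ioi (0:ℝ)).indicator fun u => Real.exp (-c * u)) := by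
    rw [integrable_indicator_iff measurableSet_Ioi]
    exact exp_neg_integrableOn_Ioi 0 hc
  have h2 := h1.comp_neg
  have h3 : (fun t : ℝ => ((Ioi (0:ℝ)).indicator fun u => Real.exp (-c * u)) (-t))
      = (Iio (0:ℝ)).indicator fun s => Real.exp (c * s) := by
    funext s
    by_cases hs : s < 0
    · have hmem : -s ∈ Ioi (0:ℝ) := by simpa using hs
      have hmem' : s ∈ Iio (0:ℝ) := hs
      rw [indicator_of_mem hmem, indicator_of_mem hmem']
      ring_nf
    · have hmem : -s ∉ Ioi (0:ℝ) := by simpa using not_lt.mp hs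
      have hmem' : s ∉ Iio (0:ℝ) := by simpa using not_lt.mp hs
      rw [indicator_of_notMem hmem, indicator_of_notMem hmem']
  rw [h3, integrable_indicator_iff measurableSet_Iio] at h2
  exact h2.congr_set_ae (Iio_ae_eq_Iic (a := (0:ℝ))).symm

noncomputable def gmaj (ν0 ν1 : ℝ) : ℝ → ℝ := fun s =>
  if s ≤ 0 then Real.exp (ν0 * s) else Real.exp (ν1 * s - Real.exp s / 2)

lemma gmaj_nonneg (ν0 ν1 s : ℝ) : 0 ≤ gmaj ν0 ν1 s := by
  unfold gmaj; split <;> positivity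

lemma gmaj_measurable (ν0 ν1 : ℝ) : Measurable (gmaj ν0 ν1) := by
  unfold gmaj
  exact Measurable.ite (measurableSet_le measurable_id measurable_const)
    (by fun_prop) (by fun_prop)

lemma gmaj_integrable {ν0 ν1 : ℝ} (h0 : 0 < ν0) (h01 : ν0 ≤ ν1) :
    Integrable (gmaj ν0 ν1) := by
  rw [← integrableOn_univ, ← Iic_union_Ioi (a := (0:ℝ))]
  apply IntegrableOn.union
  · apply (integrableOn_exp_mul_Iic' h0).congr_fun ?_ measurableSet_Iic
    intro s hs
    simp only [gmaj, if_pos (mem_Iic.mp hs)]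
  · -- on Ioi 0 : gmaj = exp (ν1 s - exp s / 2) ; dominate
    set n : ℕ := ⌈ν1⌉₊ + 1 with hn
    have hνn : ν1 + 1 ≤ (n : ℝ) := by
      have := Nat.le_ceil ν1
      push_cast [hn]; linarith
    set C : ℝ := (Nat.factorial n : ℝ) * 2 ^ n with hC
    have hbpos : (0:ℝ) < (n : ℝ) - ν1 := by linarith
    refine Integrable.mono' ((exp_neg_integrableOn_Ioi 0 hbpos).const_mul C)
      ((gmaj_measurable ν0 ν1).aestronglyMeasurable) ?_
    filter_upwards [ae_restrict_mem measurableSet_Ioi] with s hs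
    have hs0 : (0:ℝ) < s := hs
    rw [Real.norm_eq_abs, abs_of_nonneg (gmaj_nonneg _ _ _)]
    simp only [gmaj, if_neg (not_le.mpr hs0)]
    rw [Real.exp_sub]
    have h2 : Real.exp (-(Real.exp s / 2)) ≤
        (Nat.factorial n : ℝ) / (Real.exp s / 2) ^ n :=
      exp_neg_le_factorial_div n (by positivity)
    have key : Real.exp (ν1 * s) / Real.exp (Real.exp s / 2)
        ≤ Real.exp (ν1 * s) * ((Nat.factorial n : ℝ) / (Real.exp s / 2) ^ n) := by
      rw [div_eq_mul_inv, ← Real.exp_neg]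
      exact mul_le_mul_of_nonneg_left h2 (Real.exp_pos _).le
    refine key.trans ?_
    have h3 : Real.exp (ν1 * s) * ((Nat.factorial n : ℝ) / (Real.exp s / 2) ^ n)
        = C * Real.exp ((ν1 - (n:ℝ)) * s) := by
      have h5 : rexp ((n:ℝ) * s) ≠ 0 := (Real.exp_pos _).ne'
      rw [hC, div_pow, ← Real.exp_nat_mul, sub_mul, Real.exp_sub]
      field_simp
    rw [h3]
    apply le_of_eq
    congr 1
    ring

lemma bk_upper {ν0 ν1 : ℝ} (h0 : 0 < ν0) (h01 : ν0 ≤ ν1) :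
    ∃ B > (0:ℝ), ∀ ν ∈ Icc ν0 ν1, ∀ z : ℝ, 0 < z → z ≤ 1 → bk ν z ≤ B * z ^ (-ν) := by
  have hgint := gmaj_integrable h0 h01
  have hInt_nonneg : 0 ≤ ∫ s, gmaj ν0 ν1 s := integral_nonneg (gmaj_nonneg ν0 ν1)
  refine ⟨(∫ s, gmaj ν0 ν1 s) + 1, by linarith, ?_⟩
  intro ν hν z hz hz1
  obtain ⟨hν0, hν1⟩ := hν
  have hνpos : 0 < ν := lt_of_lt_of_le h0 hν0
  set L : ℝ := -Real.log z with hLdef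
  have hlogz : Real.log z = -L := by rw [hLdef]; ring
  have hL0 : 0 ≤ L := by
    have := Real.log_nonpos hz.le hz1
    simp only [hLdef]; linarith
  have hzpow : z ^ (-ν) = Real.exp (ν * L) := by
    rw [Real.rpow_def_of_pos hz]; congr 1; rw [hLdef]; ring
  have hf_int : IntegrableOn (bkIntegrand ν z) (Ioi (0:ℝ)) :=
    bkIntegrand_integrableOn hνpos.le hz
  have hg_int : Integrable (fun t : ℝ => gmaj ν0 ν1 (t - L)) :=
    hgint.comp_sub_right L
  have hzexp : ∀ t : ℝ, z * Real.exp t = Real.exp (t - L) := by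
    intro t
    rw [Real.exp_sub, hLdef, Real.exp_neg, Real.exp_log hz]
    field_simp
  have hpt : ∀ t ∈ Ioi (0:ℝ), bkIntegrand ν z t ≤
      Real.exp (ν * L) * gmaj ν0 ν1 (t - L) := by
    intro t ht
    have ht0 : (0:ℝ) < t := ht
    unfold bkIntegrand
    have hch : Real.cosh (ν * t) ≤ Real.exp (ν * t) :=
      cosh_le_exp_self (by positivity)
    have hsplit : Real.exp (ν * t) = Real.exp (ν * L) * Real.exp (ν * (t - L)) := by
      rw [← Real.exp_add]; ring_nf
    by_cases hcase : t ≤ L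
    · have hg : gmaj ν0 ν1 (t - L) = Real.exp (ν0 * (t - L)) := by
        simp [gmaj, sub_nonpos.mpr hcase]
      have hexp1 : Real.exp (-z * Real.cosh t) ≤ 1 := by
        apply Real.exp_le_one_iff.mpr
        have := Real.cosh_pos t
        nlinarith
      have hmono : Real.exp (ν * (t - L)) ≤ Real.exp (ν0 * (t - L)) := by
        apply Real.exp_le_exp.mpr
        have hts : t - L ≤ 0 := by linarith
        nlinarith
      calc Real.exp (-z * Real.cosh t) * Real.cosh (ν * t)
          ≤ 1 * Real.exp (ν * t) :=
            mul_le_mul hexp1 hch (Real.cosh_pos _).le zero_le_one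
        _ = Real.exp (ν * L) * Real.exp (ν * (t - L)) := by rw [one_mul, hsplit]
        _ ≤ Real.exp (ν * L) * gmaj ν0 ν1 (t - L) := by
            rw [hg]; exact mul_le_mul_of_nonneg_left hmono (Real.exp_pos _).le
    · push_neg at hcase
      have hg : gmaj ν0 ν1 (t - L) =
          Real.exp (ν1 * (t - L) - Real.exp (t - L) / 2) := by
        simp [gmaj, not_le.mpr (sub_pos.mpr hcase)]
      have hexp1 : Real.exp (-z * Real.cosh t) ≤ Real.exp (-(Real.exp (t - L) / 2)) := by
        apply Real.exp_le_exp.mpr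
        have h6 := half_exp_le_cosh t
        have h7 : Real.exp (t - L) / 2 ≤ z * Real.cosh t := by
          rw [← hzexp t] at *
          nlinarith
        linarith
      have hmono : Real.exp (ν * (t - L)) ≤ Real.exp (ν1 * (t - L)) := by
        apply Real.exp_le_exp.mpr
        have hts : 0 ≤ t - L := by linarith
        nlinarith
      calc Real.exp (-z * Real.cosh t) * Real.cosh (ν * t)
          ≤ Real.exp (-(Real.exp (t - L) / 2)) * Real.exp (ν * t) :=
            mul_le_mul hexp1 hch (Real.cosh_pos _).le (Real.exp_pos _).le
        _ = Real.exp (ν * L) * Real.exp (ν1 * (t - L) - Real.exp (t - L) / 2) *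
              Real.exp ((ν - ν1) * (t - L)) := by
            rw [← Real.exp_add, ← Real.exp_add, ← Real.exp_add]; ring_nf
        _ ≤ Real.exp (ν * L) * Real.exp (ν1 * (t - L) - Real.exp (t - L) / 2) * 1 := by
            apply mul_le_mul_of_nonneg_left _ (by positivity)
            apply Real.exp_le_one_iff.mpr
            have hts : 0 ≤ t - L := by linarith
            nlinarith
        _ = Real.exp (ν * L) * gmaj ν0 ν1 (t - L) := by rw [hg, mul_one]
  have step1 : bk ν z ≤ ∫ t in Ioi (0:ℝ), Real.exp (ν * L) * gmaj ν0 ν1 (t - L) := by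
    apply setIntegral_mono_on hf_int ((hg_int.const_mul _).integrableOn)
      measurableSet_Ioi hpt
  have step2 : ∫ t in Ioi (0:ℝ), Real.exp (ν * L) * gmaj ν0 ν1 (t - L)
      ≤ ∫ t : ℝ, Real.exp (ν * L) * gmaj ν0 ν1 (t - L) := by
    apply setIntegral_le_integral (hg_int.const_mul _)
    filter_upwards with t
    exact mul_nonneg (Real.exp_pos _).le (gmaj_nonneg _ _ _)
  have step3 : ∫ t : ℝ, Real.exp (ν * L) * gmaj ν0 ν1 (t - L)
      = Real.exp (ν * L) * ∫ s, gmaj ν0 ν1 s := by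
    rw [integral_const_mul]
    congr 1
    exact integral_sub_right_eq_self (gmaj ν0 ν1) L
  calc bk ν z ≤ Real.exp (ν * L) * ∫ s, gmaj ν0 ν1 s := by
        rw [← step3]; exact step1.trans step2
    _ ≤ Real.exp (ν * L) * ((∫ s, gmaj ν0 ν1 s) + 1) := by
        apply mul_le_mul_of_nonneg_left (by linarith) (Real.exp_pos _).le
    _ = ((∫ s, gmaj ν0 ν1 s) + 1) * z ^ (-ν) := by rw [hzpow]; ring


lemma gamma_neg_ne_zero {s0 s1 b : ℝ} (hs0 : 0 < s0) (hs1 : s1 < 1)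
    (hb : b ∈ Icc s0 s1) : Real.Gamma (-b) ≠ 0 := by
  apply Real.Gamma_ne_zero
  intro m
  intro hcontra
  have hbm : b = (m : ℝ) := by linarith [neg_injective hcontra]
  rcases Nat.eq_zero_or_pos m with hm | hm
  · rw [hm] at hbm; norm_num at hbm; linarith [hb.1]
  · have : (1 : ℝ) ≤ (m : ℝ) := by exact_mod_cast hm
    linarith [hb.2]

lemma prefactor_pos {d : ℕ} {κ s0 s1 b : ℝ} (hκ : 0 < κ) (hs0 : 0 < s0)
    (hs1 : s1 < 1) (hb : b ∈ Icc s0 s1) : 0 < kernelPrefactor d κ b := by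
  unfold kernelPrefactor
  have hΓ := gamma_neg_ne_zero hs0 hs1 hb
  apply mul_pos
  apply div_pos
  · exact mul_pos (Real.rpow_pos_of_pos Real.pi_pos _) (Real.rpow_pos_of_pos (by norm_num) _)
  · exact abs_pos.mpr hΓ
  · exact Real.rpow_pos_of_pos hκ _

lemma prefactor_contOn {d : ℕ} {κ s0 s1 : ℝ} (hκ : 0 < κ) (hs0 : 0 < s0)
    (hs1 : s1 < 1) :
    ContinuousOn (fun b => (1/2 : ℝ) * kernelPrefactor d κ b *
      κ ^ (-((d : ℝ)/2 + b))) (Icc s0 s1) := by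
  intro b hb
  apply ContinuousAt.continuousWithinAt
  have hΓ := gamma_neg_ne_zero hs0 hs1 hb
  have c1 : ContinuousAt (fun b : ℝ => (2:ℝ) ^ (1 - (d:ℝ)/2 + b)) b :=
    ContinuousAt.rpow continuousAt_const (by fun_prop) (Or.inl (by norm_num))
  have cΓ : ContinuousAt (fun b : ℝ => |Real.Gamma (-b)|) b := by
    have hd : DifferentiableAt ℝ Real.Gamma (-b) := by
      apply Real.differentiableAt_Gamma
      intro m hcontra
      have hbm : b = (m : ℝ) := by linarith [neg_injective hcontra]
      rcases Nat.eq_zero_or_pos m with hm | hm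
      · rw [hm] at hbm; norm_num at hbm; linarith [hb.1]
      · have : (1 : ℝ) ≤ (m : ℝ) := by exact_mod_cast hm
        linarith [hb.2]
    exact (hd.continuousAt.comp (continuous_neg.continuousAt)).abs
  have cκ : ContinuousAt (fun b : ℝ => κ ^ ((d:ℝ)/2 + b)) b :=
    ContinuousAt.rpow continuousAt_const (by fun_prop) (Or.inl hκ.ne')
  have cκ' : ContinuousAt (fun b : ℝ => κ ^ (-((d:ℝ)/2 + b))) b :=
    ContinuousAt.rpow continuousAt_const (by fun_prop) (Or.inl hκ.ne')
  have hΓabs : |Real.Gamma (-b)| ≠ 0 := abs_ne_zero.mpr hΓ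
  unfold kernelPrefactor
  exact (continuousAt_const.mul
    ((((continuousAt_const.mul c1).div cΓ hΓabs).mul cκ))).mul cκ'


lemma besselK_eq_bk (ν z : ℝ) : besselK ν z = bk ν z := rfl

/-- Near-diagonal two-sided power-law bounds for the variable-order kernel. -/
theorem varKernel_near_diagonal_bounds
    (d : ℕ) (hd : 1 ≤ d) (κ : ℝ) (hκ : 0 < κ)
    (s0 s1 : ℝ) (hs0 : 0 < s0) (hs01 : s0 ≤ s1) (hs1 : s1 < 1)
    (β : EuclideanSpace ℝ (Fin d) × EuclideanSpace ℝ (Fin d) → ℝ)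
    (hβmeas : Measurable β)
    (hβrange : ∀ p, β p ∈ Set.Icc s0 s1) :
    ∃ r0 > (0 : ℝ), ∃ c1 > (0 : ℝ), ∃ c2 > (0 : ℝ),
      ∀ x y : EuclideanSpace ℝ (Fin d), 0 < ‖x - y‖ → ‖x - y‖ ≤ r0 →
        c1 * ‖x - y‖ ^ (-((d : ℝ) + 2 * β (x, y))) ≤ varKernel d κ β x y ∧
        varKernel d κ β x y ≤ c2 * ‖x - y‖ ^ (-((d : ℝ) + 2 * β (x, y))) := by
  have hν0pos : (0:ℝ) < (d:ℝ)/2 + s0 := by positivity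
  obtain ⟨B, hB, hupper⟩ := bk_upper (ν0 := (d:ℝ)/2 + s0) (ν1 := (d:ℝ)/2 + s1)
    hν0pos (by linarith)
  set H : ℝ → ℝ := fun b => (1/2 : ℝ) * kernelPrefactor d κ b *
    κ ^ (-((d : ℝ)/2 + b)) with hHdef
  have Hpos : ∀ b ∈ Icc s0 s1, 0 < H b := by
    intro b hb
    exact mul_pos (mul_pos (by norm_num) (prefactor_pos hκ hs0 hs1 hb))
      (Real.rpow_pos_of_pos hκ _)
  obtain ⟨bmin, hbmin, hmin⟩ := isCompact_Icc.exists_isMinOn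
    (nonempty_Icc.mpr hs01) (prefactor_contOn (d := d) hκ hs0 hs1)
  obtain ⟨bmax, hbmax, hmax⟩ := isCompact_Icc.exists_isMaxOn
    (nonempty_Icc.mpr hs01) (prefactor_contOn (d := d) hκ hs0 hs1)
  set A : ℝ := Real.exp (-Real.exp 1) / 2 with hAdef
  have hApos : 0 < A := by positivity
  refine ⟨κ⁻¹, by positivity, H bmin * A, mul_pos (Hpos bmin hbmin) hApos,
    H bmax * B, mul_pos (Hpos bmax hbmax) hB, ?_⟩
  intro x y hr hr0
  set r : ℝ := ‖x - y‖ with hrdef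
  set b : ℝ := β (x, y) with hbdef
  have hb : b ∈ Icc s0 s1 := hβrange (x, y)
  set ν : ℝ := (d:ℝ)/2 + b with hνdef
  have hν : ν ∈ Icc ((d:ℝ)/2 + s0) ((d:ℝ)/2 + s1) :=
    ⟨by rw [hνdef]; linarith [hb.1], by rw [hνdef]; linarith [hb.2]⟩
  have hνpos : 0 < ν := lt_of_lt_of_le hν0pos hν.1
  set z : ℝ := κ * r with hzdef
  have hz : 0 < z := mul_pos hκ hr
  have hz1 : z ≤ 1 := by
    rw [hzdef]
    calc κ * r ≤ κ * κ⁻¹ := mul_le_mul_of_nonneg_left hr0 hκ.le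
      _ = 1 := mul_inv_cancel₀ hκ.ne'
  have hκν : (0:ℝ) < κ ^ ν := Real.rpow_pos_of_pos hκ ν
  have hid : varKernel d κ β x y = H b * (besselK ν z * z ^ ν) * r ^ (-((d:ℝ) + 2*b)) := by
    show (1 / 2) * kernelPrefactor d κ b * besselK ν z * r ^ ν / r ^ ((d : ℝ) + 2 * b)
      = (1/2 * kernelPrefactor d κ b * κ ^ (-((d:ℝ)/2 + b))) *
        (besselK ν z * (κ * r) ^ ν) * r ^ (-((d:ℝ) + 2*b))
    rw [Real.mul_rpow hκ.le (norm_nonneg _), Real.rpow_neg hκ.le,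
      Real.rpow_neg (norm_nonneg _), div_eq_mul_inv]
    have h1 : (r : ℝ) ^ ((d:ℝ) + 2*b) ≠ 0 := (Real.rpow_pos_of_pos hr _).ne'
    field_simp
    rw [← hrdef, hνdef]
    field_simp
  have hcancel : z ^ (-ν) * z ^ ν = 1 := by
    rw [← Real.rpow_add hz]; simp
  have hKlow : A ≤ besselK ν z * z ^ ν := by
    have h := bk_lower (ν := ν) (z := z) hνpos.le hz hz1
    rw [besselK_eq_bk]
    calc A = (A * z ^ (-ν)) * z ^ ν := by
          rw [mul_assoc, hcancel, mul_one]
      _ ≤ bk ν z * z ^ ν := by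
          apply mul_le_mul_of_nonneg_right _ (Real.rpow_nonneg hz.le ν)
          rw [hAdef]; exact h
  have hKup : besselK ν z * z ^ ν ≤ B := by
    have h := hupper ν hν z hz hz1
    rw [besselK_eq_bk]
    calc bk ν z * z ^ ν ≤ (B * z ^ (-ν)) * z ^ ν := by
          apply mul_le_mul_of_nonneg_right h (Real.rpow_nonneg hz.le ν)
      _ = B := by rw [mul_assoc, hcancel, mul_one]
  have hR : (0:ℝ) ≤ r ^ (-((d:ℝ) + 2*b)) := Real.rpow_nonneg hr.le _
  have hKnn : 0 ≤ besselK ν z * z ^ ν := le_trans hApos.le hKlow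
  constructor
  · rw [hid]
    apply mul_le_mul_of_nonneg_right _ hR
    exact mul_le_mul (hmin hb) hKlow hApos.le (Hpos b hb).le
  · rw [hid]
    apply mul_le_mul_of_nonneg_right _ hR
    exact mul_le_mul (hmax hb) hKup hKnn (Hpos bmax hbmax).le


end
end

section
/- Let G ⊂ ℝ^d be bounded and measurable, let γ be a nonnegative measurable symmetric kernel on G × G, and let s : G → [s0, s1] ⊂ (0,1) be measurable with κ > 0. Define the energy space V = {v ∈ L²(G) : ‖v‖_V < ∞}, where ‖v‖_V² = ‖κ^{s(·)} v‖_{L²(G)}² + ∬_{G×G} (v(x) − v(y))² γ(x,y) dy dx. Then (V, ‖·‖_V) is a complete normed space (a Hilbert space with the corresponding inner product). -/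
open MeasureTheory Real Set ENNReal

noncomputable section

/-- The squared variable-order energy norm
`‖v‖_V² = ‖κ^{s(·)} v‖_{L²(G)}² + ∬_{G×G} (v(x)−v(y))² γ(x,y) dy dx`,
valued in `ℝ≥0∞`. -/
def energyNormSq (d : ℕ) (G : Set (EuclideanSpace ℝ (Fin d))) (κ : ℝ)
    (s : EuclideanSpace ℝ (Fin d) → ℝ)
    (γ : EuclideanSpace ℝ (Fin d) → EuclideanSpace ℝ (Fin d) → ℝ)
    (v : EuclideanSpace ℝ (Fin d) → ℝ) : ℝ≥0∞ :=
  (∫⁻ x in G, ENNReal.ofReal ((κ ^ s x * v x) ^ 2)) +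
    ∫⁻ p in G ×ˢ G,
      ENNReal.ofReal ((v p.1 - v p.2) ^ 2 * γ p.1 p.2) ∂(volume.prod volume)

/-- Auxiliary: the lintegral of the square equals the square of the `L²` seminorm. -/
lemma lintegral_ofReal_sq_eq {α : Type*} [MeasurableSpace α] (μ : Measure α) (h : α → ℝ) :
    ∫⁻ x, ENNReal.ofReal (h x ^ 2) ∂μ = eLpNorm h 2 μ ^ 2 := by
  have h2 : ((2 : ℝ≥0∞)).toReal = 2 := by norm_num
  rw [eLpNorm_eq_lintegral_rpow_enorm_toReal (by norm_num) (by norm_num), h2,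
    ← ENNReal.rpow_natCast _ 2, ← ENNReal.rpow_mul]
  have hint : ∀ x, ‖h x‖ₑ ^ (2 : ℝ) = ENNReal.ofReal (h x ^ 2) := by
    intro x
    rw [show (2 : ℝ) = ((2 : ℕ) : ℝ) by norm_num, ENNReal.rpow_natCast,
      Real.enorm_eq_ofReal_abs, ← ENNReal.ofReal_pow (abs_nonneg _), sq_abs]
  rw [lintegral_congr hint]
  norm_num

/-- Auxiliary: membership in `ℒ²` from a finite square lintegral. -/
lemma memLp_of_sq_lt {α : Type*} [MeasurableSpace α] {μ : Measure α} {h : α → ℝ}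
    (hm : AEStronglyMeasurable h μ)
    (hfin : ∫⁻ x, ENNReal.ofReal (h x ^ 2) ∂μ < ⊤) : MemLp h 2 μ := by
  refine ⟨hm, ?_⟩
  rw [lintegral_ofReal_sq_eq] at hfin
  by_contra hc
  rw [not_lt, top_le_iff] at hc
  rw [hc, ENNReal.top_pow (by norm_num)] at hfin
  exact lt_irrefl _ hfin

/-- Auxiliary: strict monotone-ish lemma for squares in `ℝ≥0∞`. -/
lemma lt_of_sq_lt_sq {a b : ℝ≥0∞} (h : a ^ 2 < b ^ 2) : a < b := by
  by_contra hc
  rw [not_lt] at hc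
  exact absurd (pow_le_pow_left₀ zero_le hc 2) (not_le.mpr h)

/-- Completeness of the variable-order energy space: every Cauchy sequence
(with respect to the energy norm) of functions of finite energy norm converges
in the energy norm to a function of finite energy norm. -/
theorem energy_space_complete
    (d : ℕ) (hd : 1 ≤ d)
    (G : Set (EuclideanSpace ℝ (Fin d))) (hGmeas : MeasurableSet G)
    (hGbdd : Bornology.IsBounded G)
    (κ : ℝ) (hκ : 0 < κ)
    (s0 s1 : ℝ) (hs0 : 0 < s0) (hs01 : s0 ≤ s1) (hs1 : s1 < 1)
    (s : EuclideanSpace ℝ (Fin d) → ℝ) (hsmeas : Measurable s)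
    (hsrange : ∀ x, s x ∈ Set.Icc s0 s1)
    (γ : EuclideanSpace ℝ (Fin d) → EuclideanSpace ℝ (Fin d) → ℝ)
    (hγmeas : Measurable (Function.uncurry γ))
    (hγnonneg : ∀ x y, 0 ≤ γ x y)
    (hγsymm : ∀ x y, γ x y = γ y x)
    (u : ℕ → EuclideanSpace ℝ (Fin d) → ℝ)
    (humeas : ∀ n, Measurable (u n))
    (hufin : ∀ n, energyNormSq d G κ s γ (u n) < ⊤)
    (hcauchy : ∀ ε : ℝ, 0 < ε → ∃ N : ℕ, ∀ m ≥ N, ∀ n ≥ N,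
      energyNormSq d G κ s γ (fun x => u m x - u n x) < ENNReal.ofReal ε) :
    ∃ uLim : EuclideanSpace ℝ (Fin d) → ℝ, Measurable uLim ∧
      energyNormSq d G κ s γ uLim < ⊤ ∧
      Filter.Tendsto (fun n => energyNormSq d G κ s γ (fun x => u n x - uLim x))
        Filter.atTop (nhds 0) := by
  classical
  set μ : Measure (EuclideanSpace ℝ (Fin d)) := volume.restrict G with hμdef
  set ν : Measure (EuclideanSpace ℝ (Fin d) × EuclideanSpace ℝ (Fin d)) :=
    (volume.prod volume).restrict (G ×ˢ G) with hνdef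
  set w : EuclideanSpace ℝ (Fin d) → ℝ := fun x => κ ^ s x with hwdef
  have hwpos : ∀ x, 0 < w x := fun x => Real.rpow_pos_of_pos hκ _
  have hwmeas : Measurable w := by
    have : w = fun x => Real.exp (Real.log κ * s x) :=
      funext fun x => Real.rpow_def_of_pos hκ _
    rw [this]
    exact Real.measurable_exp.comp (measurable_const.mul hsmeas)
  set sγ : EuclideanSpace ℝ (Fin d) × EuclideanSpace ℝ (Fin d) → ℝ :=
    fun p => Real.sqrt (γ p.1 p.2) with hsγdef
  have hsγmeas : Measurable sγ := hγmeas.sqrt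
  set f : ℕ → EuclideanSpace ℝ (Fin d) → ℝ := fun n x => w x * u n x with hfdef
  have hfmeas : ∀ n, Measurable (f n) := fun n => hwmeas.mul (humeas n)
  set g : ℕ → EuclideanSpace ℝ (Fin d) × EuclideanSpace ℝ (Fin d) → ℝ :=
    fun n p => (u n p.1 - u n p.2) * sγ p with hgdef
  have hgmeas : ∀ n, Measurable (g n) := fun n =>
    (((humeas n).comp measurable_fst).sub ((humeas n).comp measurable_snd)).mul hsγmeas
  -- energy decomposition
  have henergy : ∀ v : EuclideanSpace ℝ (Fin d) → ℝ, energyNormSq d G κ s γ v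
      = eLpNorm (fun x => w x * v x) 2 μ ^ 2
        + eLpNorm (fun p => (v p.1 - v p.2) * sγ p) 2 ν ^ 2 := by
    intro v
    have h1 : (∫⁻ x in G, ENNReal.ofReal ((κ ^ s x * v x) ^ 2))
        = ∫⁻ x, ENNReal.ofReal ((w x * v x) ^ 2) ∂μ := rfl
    have h2 : (∫⁻ p in G ×ˢ G,
        ENNReal.ofReal ((v p.1 - v p.2) ^ 2 * γ p.1 p.2) ∂(volume.prod volume))
        = ∫⁻ p, ENNReal.ofReal (((v p.1 - v p.2) * sγ p) ^ 2) ∂ν := by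
      refine lintegral_congr fun p => ?_
      simp only [hsγdef]
      rw [mul_pow, Real.sq_sqrt (hγnonneg _ _)]
    rw [energyNormSq, h1, h2, lintegral_ofReal_sq_eq, lintegral_ofReal_sq_eq]
  -- membership in L²
  have hfmem : ∀ n, MemLp (f n) 2 μ := by
    intro n
    refine memLp_of_sq_lt (hfmeas n).aestronglyMeasurable ?_
    rw [lintegral_ofReal_sq_eq]
    have h := hufin n
    rw [henergy (u n)] at h
    exact lt_of_le_of_lt le_self_add h
  have hgmem : ∀ n, MemLp (g n) 2 ν := by
    intro n
    refine memLp_of_sq_lt (hgmeas n).aestronglyMeasurable ?_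
    rw [lintegral_ofReal_sq_eq]
    have h := hufin n
    rw [henergy (u n)] at h
    exact lt_of_le_of_lt le_add_self h
  -- Cauchy property for both components
  have hkey : ∀ ε : ℝ, 0 < ε → ∃ N : ℕ, ∀ m ≥ N, ∀ n ≥ N,
      eLpNorm (f m - f n) 2 μ < ENNReal.ofReal ε ∧
      eLpNorm (g m - g n) 2 ν < ENNReal.ofReal ε := by
    intro ε hε
    obtain ⟨N, hN⟩ := hcauchy (ε ^ 2) (by positivity)
    refine ⟨N, fun m hm n hn => ?_⟩
    have hEn := hN m hm n hn
    rw [henergy (fun x => u m x - u n x)] at hEn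
    have hfeq : (fun x => w x * (u m x - u n x)) = f m - f n := by
      funext x; simp only [hfdef, Pi.sub_apply]; ring
    have hgeq : (fun p : EuclideanSpace ℝ (Fin d) × EuclideanSpace ℝ (Fin d) =>
        ((u m p.1 - u n p.1) - (u m p.2 - u n p.2)) * sγ p) = g m - g n := by
      funext p; simp only [hgdef, Pi.sub_apply]; ring
    rw [hfeq, hgeq, ENNReal.ofReal_pow hε.le] at hEn
    constructor
    · exact lt_of_sq_lt_sq (lt_of_le_of_lt le_self_add hEn)
    · exact lt_of_sq_lt_sq (lt_of_le_of_lt le_add_self hEn)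
  -- Lp elements and their limits
  set fL : ℕ → Lp ℝ 2 μ := fun n => (hfmem n).toLp (f n) with hfLdef
  set gL : ℕ → Lp ℝ 2 ν := fun n => (hgmem n).toLp (g n) with hgLdef
  have hfdist : ∀ m n, dist (fL m) (fL n) = (eLpNorm (f m - f n) 2 μ).toReal := by
    intro m n
    rw [dist_eq_norm]
    exact Lp.norm_toLp (f m - f n) ((hfmem m).sub (hfmem n))
  have hgdist : ∀ m n, dist (gL m) (gL n) = (eLpNorm (g m - g n) 2 ν).toReal := by
    intro m n
    rw [dist_eq_norm]
    exact Lp.norm_toLp (g m - g n) ((hgmem m).sub (hgmem n))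
  have hfcauchy : CauchySeq fL := by
    rw [Metric.cauchySeq_iff]
    intro ε hε
    obtain ⟨N, hN⟩ := hkey ε hε
    exact ⟨N, fun m hm n hn => by
      rw [hfdist]; exact ENNReal.toReal_lt_of_lt_ofReal (hN m hm n hn).1⟩
  have hgcauchy : CauchySeq gL := by
    rw [Metric.cauchySeq_iff]
    intro ε hε
    obtain ⟨N, hN⟩ := hkey ε hε
    exact ⟨N, fun m hm n hn => by
      rw [hgdist]; exact ENNReal.toReal_lt_of_lt_ofReal (hN m hm n hn).2⟩
  obtain ⟨Flp, hFlp⟩ := cauchySeq_tendsto_of_complete hfcauchy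
  obtain ⟨Glp, hGlp⟩ := cauchySeq_tendsto_of_complete hgcauchy
  set Fl : EuclideanSpace ℝ (Fin d) → ℝ := ⇑Flp with hFldef
  set Hl : EuclideanSpace ℝ (Fin d) × EuclideanSpace ℝ (Fin d) → ℝ := ⇑Glp with hHldef
  have hFlmem : MemLp Fl 2 μ := Lp.memLp Flp
  have hHlmem : MemLp Hl 2 ν := Lp.memLp Glp
  have hFlmeas : Measurable Fl := (Lp.stronglyMeasurable Flp).measurable
  -- distance to the limit
  have hfdistL : ∀ n, dist (fL n) Flp = (eLpNorm (f n - Fl) 2 μ).toReal := by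
    intro n
    rw [dist_eq_norm, Lp.norm_def]
    congr 1
    refine eLpNorm_congr_ae ?_
    exact (Lp.coeFn_sub _ _).trans (((hfmem n).coeFn_toLp).sub (Filter.EventuallyEq.refl _ _))
  have hgdistL : ∀ n, dist (gL n) Glp = (eLpNorm (g n - Hl) 2 ν).toReal := by
    intro n
    rw [dist_eq_norm, Lp.norm_def]
    congr 1
    refine eLpNorm_congr_ae ?_
    exact (Lp.coeFn_sub _ _).trans (((hgmem n).coeFn_toLp).sub (Filter.EventuallyEq.refl _ _))
  have hfne : ∀ n, eLpNorm (f n - Fl) 2 μ ≠ ⊤ := fun n =>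
    ((hfmem n).sub hFlmem).eLpNorm_ne_top
  have hgne : ∀ n, eLpNorm (g n - Hl) 2 ν ≠ ⊤ := fun n =>
    ((hgmem n).sub hHlmem).eLpNorm_ne_top
  have hftendsto : Filter.Tendsto (fun n => eLpNorm (f n - Fl) 2 μ) Filter.atTop (nhds 0) := by
    have h1 : Filter.Tendsto (fun n => dist (fL n) Flp) Filter.atTop (nhds 0) :=
      tendsto_iff_dist_tendsto_zero.mp hFlp
    have h2 := ENNReal.tendsto_ofReal h1
    rw [ENNReal.ofReal_zero] at h2
    refine h2.congr fun n => ?_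
    rw [hfdistL, ENNReal.ofReal_toReal (hfne n)]
  have hgtendsto : Filter.Tendsto (fun n => eLpNorm (g n - Hl) 2 ν) Filter.atTop (nhds 0) := by
    have h1 : Filter.Tendsto (fun n => dist (gL n) Glp) Filter.atTop (nhds 0) :=
      tendsto_iff_dist_tendsto_zero.mp hGlp
    have h2 := ENNReal.tendsto_ofReal h1
    rw [ENNReal.ofReal_zero] at h2
    refine h2.congr fun n => ?_
    rw [hgdistL, ENNReal.ofReal_toReal (hgne n)]
  -- a.e. convergent subsequence
  have hfim : TendstoInMeasure μ f Filter.atTop Fl :=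
    tendstoInMeasure_of_tendsto_eLpNorm (by norm_num)
      (fun n => (hfmeas n).aestronglyMeasurable) hFlmem.1 hftendsto
  obtain ⟨φ, hφmono, hφae⟩ := hfim.exists_seq_tendsto_ae
  have hgim : TendstoInMeasure ν (fun k => g (φ k)) Filter.atTop Hl :=
    tendstoInMeasure_of_tendsto_eLpNorm (by norm_num)
      (fun k => (hgmeas (φ k)).aestronglyMeasurable) hHlmem.1
      (hgtendsto.comp hφmono.tendsto_atTop)
  obtain ⟨ψ, hψmono, hψae⟩ := hgim.exists_seq_tendsto_ae
  -- the limit function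
  set uLim : EuclideanSpace ℝ (Fin d) → ℝ := fun x => Fl x / w x with huLdef
  have hwu : ∀ x, w x * uLim x = Fl x := by
    intro x
    simp only [huLdef]
    rw [mul_comm, div_mul_cancel₀ _ (hwpos x).ne']
  have huLmeas : Measurable uLim := hFlmeas.div hwmeas
  -- a.e. convergence of u along subsequence
  have huae : ∀ᵐ x ∂μ, Filter.Tendsto (fun k => u (φ (ψ k)) x) Filter.atTop (nhds (uLim x)) := by
    filter_upwards [hφae] with x hx
    have hx' : Filter.Tendsto (fun k => f (φ (ψ k)) x) Filter.atTop (nhds (Fl x)) :=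
      hx.comp hψmono.tendsto_atTop
    have hdiv := hx'.div_const (w x)
    refine hdiv.congr fun k => ?_
    simp only [hfdef]
    rw [mul_comm, mul_div_assoc, div_self (hwpos x).ne', mul_one]
  -- transfer to the product measure
  have hνprod : ν = μ.prod μ := by
    rw [hνdef, hμdef, Measure.prod_restrict]
  have hpair : ∀ᵐ p ∂ν,
      Filter.Tendsto (fun k => u (φ (ψ k)) p.1) Filter.atTop (nhds (uLim p.1)) ∧
      Filter.Tendsto (fun k => u (φ (ψ k)) p.2) Filter.atTop (nhds (uLim p.2)) := by
    rw [hνprod]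
    exact (Measure.quasiMeasurePreserving_fst.ae huae).and
      (Measure.quasiMeasurePreserving_snd.ae huae)
  -- identify Hl with the difference function of uLim
  have hHleq : Hl =ᵐ[ν] fun p => (uLim p.1 - uLim p.2) * sγ p := by
    filter_upwards [hpair, hψae] with p hp hgp
    have hglim : Filter.Tendsto (fun k => g (φ (ψ k)) p) Filter.atTop
        (nhds ((uLim p.1 - uLim p.2) * sγ p)) := (hp.1.sub hp.2).mul_const _
    exact tendsto_nhds_unique hgp hglim
  refine ⟨uLim, huLmeas, ?_, ?_⟩
  · -- finite energy
    rw [henergy uLim]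
    have h1 : (fun x => w x * uLim x) = Fl := funext hwu
    have h2 : eLpNorm (fun p : EuclideanSpace ℝ (Fin d) × EuclideanSpace ℝ (Fin d) =>
        (uLim p.1 - uLim p.2) * sγ p) 2 ν = eLpNorm Hl 2 ν := eLpNorm_congr_ae hHleq.symm
    rw [h1, h2]
    exact ENNReal.add_lt_top.mpr
      ⟨ENNReal.pow_lt_top (n := 2) hFlmem.2, ENNReal.pow_lt_top (n := 2) hHlmem.2⟩
  · -- convergence in energy norm
    have heq : ∀ n, energyNormSq d G κ s γ (fun x => u n x - uLim x)
        = eLpNorm (f n - Fl) 2 μ ^ 2 + eLpNorm (g n - Hl) 2 ν ^ 2 := by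
      intro n
      rw [henergy (fun x => u n x - uLim x)]
      congr 1
      · congr 1
        refine eLpNorm_congr_ae (Filter.EventuallyEq.of_eq (funext fun x => ?_))
        simp only [Pi.sub_apply, hfdef]
        rw [← hwu x]
        ring
      · congr 1
        refine eLpNorm_congr_ae ?_
        have hfun : (fun p : EuclideanSpace ℝ (Fin d) × EuclideanSpace ℝ (Fin d) =>
            ((u n p.1 - uLim p.1) - (u n p.2 - uLim p.2)) * sγ p)
            = fun p => g n p - (uLim p.1 - uLim p.2) * sγ p := by
          funext p; simp only [hgdef]; ring
        rw [hfun]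
        filter_upwards [hHleq] with p hp
        simp only [Pi.sub_apply, hp]
    have h1 : Filter.Tendsto (fun n => eLpNorm (f n - Fl) 2 μ ^ 2) Filter.atTop (nhds 0) := by
      have := ENNReal.Tendsto.pow (n := 2) hftendsto
      simpa using this
    have h2 : Filter.Tendsto (fun n => eLpNorm (g n - Hl) 2 ν ^ 2) Filter.atTop (nhds 0) := by
      have := ENNReal.Tendsto.pow (n := 2) hgtendsto
      simpa using this
    have h3 := h1.add h2
    rw [add_zero] at h3
    exact h3.congr fun n => (heq n).symm

end
end
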